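/- Let T be a finite AND/OR tree and let the cost functions p, d be computed with Ψ = sum, all edge costs 0, and h = h̄ ≡ 1 at non-terminal leaves (this is the proof-number/disproof-number scheme). Then for every node x: p(x) equals the minimum, over all solution bases rooted at x (subtrees containing exactly one child of each of their internal OR nodes and all children of each of their internal AND nodes) that contain no unsolvable terminal leaf, of the number of non-terminal leaves of the base, where the minimum over the empty collection is ∞. Dually, d(x) equals the minimum, over all disproof bases rooted at x (all children at OR nodes, exactly one child at AND nodes) that contain no solvable terminal leaf, of the number of non-terminal leaves of the base. In particular, p(x) and d(x) are the minimum numbers of non-terminal leaf nodes that must be examined in order to prove, respectively disprove, x. -/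

import Mathlib

/-!
Statement 4: in a finite AND/OR tree with the proof-number scheme
(`Ψ = sum`, zero edge costs, `h = h̄ ≡ 1` at non-terminal leaves), the proof
number `pn x` is the minimum, over all solution bases rooted at `x` containing
no unsolvable terminal leaf, of the number of non-terminal leaves of the base
(`∞` if no such base exists); dually for the disproof number `dn x`.
-/

/-- A node of an AND/OR tree is labeled either OR or AND. -/
inductive NodeKind : Type
  | orN
  | andN
deriving DecidableEq

/-- A leaf is a solvable terminal, an unsolvable terminal, or a non-terminal leaf. -/
inductive LeafKind : Type
  | solv
  | unsolv
  | nonterm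
deriving DecidableEq

/-- A finite AND/OR tree on a node type `V`, presented by a successor function
(`succ n = ∅` means `n` is a leaf) with a well-founded successor relation and
at most one parent per node. -/
structure AOTree (V : Type) where
  succ : V → Finset V
  kind : V → NodeKind
  leafKind : V → LeafKind
  acyclic : WellFounded (fun a b : V => a ∈ succ b)
  oneParent : ∀ x n n' : V, x ∈ succ n → x ∈ succ n' → n = n'

/-- `pn` is the proof-number function: `0` on solvable terminals, `∞` on
unsolvable terminals, `1` on non-terminal leaves, the minimum of the
children's values at internal OR nodes and their sum at internal AND nodes. -/
def IsProofNumber {V : Type} (T : AOTree V) (pn : V → ℕ∞) : Prop :=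
  ∀ n : V,
    (T.succ n = ∅ →
      pn n = (match T.leafKind n with
              | .solv => 0
              | .unsolv => ⊤
              | .nonterm => 1)) ∧
    (T.succ n ≠ ∅ →
      pn n = (match T.kind n with
              | .orN => (T.succ n).inf pn
              | .andN => ∑ x ∈ T.succ n, pn x))

/-- `dn` is the disproof-number function: `∞` on solvable terminals, `0` on
unsolvable terminals, `1` on non-terminal leaves, the sum of the children's
values at internal OR nodes and their minimum at internal AND nodes. -/
def IsDisproofNumber {V : Type} (T : AOTree V) (dn : V → ℕ∞) : Prop :=
  ∀ n : V,
    (T.succ n = ∅ →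
      dn n = (match T.leafKind n with
              | .solv => ⊤
              | .unsolv => 0
              | .nonterm => 1)) ∧
    (T.succ n ≠ ∅ →
      dn n = (match T.kind n with
              | .orN => ∑ x ∈ T.succ n, dn x
              | .andN => (T.succ n).inf dn))

/-- `B` is (the node set of) a solution base rooted at `x`: a subtree
containing `x` (every other element has a parent in `B`), exactly one child of
each of its internal OR nodes, and all children of each of its internal AND
nodes. -/
def IsSolutionBase {V : Type} (T : AOTree V) (x : V) (B : Finset V) : Prop :=
  x ∈ B ∧
  (∀ y ∈ B, y ≠ x → ∃ z ∈ B, y ∈ T.succ z) ∧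
  (∀ y ∈ B, T.succ y ≠ ∅ → T.kind y = .orN → ∃! z : V, z ∈ T.succ y ∧ z ∈ B) ∧
  (∀ y ∈ B, T.succ y ≠ ∅ → T.kind y = .andN → ∀ z ∈ T.succ y, z ∈ B)

/-- `B` is (the node set of) a disproof base rooted at `x`: all children at OR
nodes, exactly one child at AND nodes. -/
def IsDisproofBase {V : Type} (T : AOTree V) (x : V) (B : Finset V) : Prop :=
  x ∈ B ∧
  (∀ y ∈ B, y ≠ x → ∃ z ∈ B, y ∈ T.succ z) ∧
  (∀ y ∈ B, T.succ y ≠ ∅ → T.kind y = .orN → ∀ z ∈ T.succ y, z ∈ B) ∧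
  (∀ y ∈ B, T.succ y ≠ ∅ → T.kind y = .andN → ∃! z : V, z ∈ T.succ y ∧ z ∈ B)

/-- The number of non-terminal leaves contained in `B`. -/
def nontermLeafCount {V : Type} [DecidableEq V] (T : AOTree V) (B : Finset V) : ℕ :=
  (B.filter (fun y => T.succ y = ∅ ∧ T.leafKind y = .nonterm)).card

namespace AOHelp

variable {V : Type} (T : AOTree V)

/-- the child relation: `a` is a child of `b`. -/
abbrev chld (a b : V) : Prop := a ∈ T.succ b

lemma wf_not_self {α} {r : α → α → Prop} (h : WellFounded r) (a : α) : ¬ r a a := by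
  induction a using h.induction with
  | _ a ih => exact fun hr => ih a hr hr

lemma no_cycle (a : V) : ¬ Relation.TransGen (chld T) a a :=
  wf_not_self T.acyclic.transGen a

variable [Fintype V]

lemma swap_wf : WellFounded (fun a b : V => b ∈ T.succ a) := by
  have h1 : WellFounded (Relation.TransGen (fun a b : V => b ∈ T.succ a)) := by
    haveI : IsTrans V (Relation.TransGen (fun a b : V => b ∈ T.succ a)) := inferInstance
    haveI : IsIrrefl V (Relation.TransGen (fun a b : V => b ∈ T.succ a)) := by
      constructor
      intro a h
      exact no_cycle T a ((Relation.transGen_swap).mp h)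
    exact Finite.wellFounded_of_trans_of_irrefl _
  exact Subrelation.wf (fun {a b} h => Relation.TransGen.single h) h1

/-- every member of a base is a descendant of the root -/
lemma base_desc {x : V} {B : Finset V} (hx : x ∈ B)
    (hpar : ∀ y ∈ B, y ≠ x → ∃ z ∈ B, y ∈ T.succ z) :
    ∀ y ∈ B, Relation.ReflTransGen (chld T) y x := by
  intro y
  induction y using (swap_wf T).induction with
  | _ y ih =>
    intro hy
    by_cases hyx : y = x
    · exact hyx ▸ Relation.ReflTransGen.refl
    · obtain ⟨z, hzB, hyz⟩ := hpar y hy hyx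
      exact Relation.ReflTransGen.head hyz (ih z hyz hzB)

/-- ancestors of a node are comparable -/
lemma anc_comparable : ∀ y a b : V, Relation.ReflTransGen (chld T) y a →
    Relation.ReflTransGen (chld T) y b →
    Relation.ReflTransGen (chld T) a b ∨ Relation.ReflTransGen (chld T) b a := by
  intro y
  induction y using (swap_wf T).induction with
  | _ y ih =>
    intro a b ha hb
    rcases Relation.ReflTransGen.cases_head ha with rfl | ⟨p, hyp, hpa⟩
    · exact Or.inl hb
    rcases Relation.ReflTransGen.cases_head hb with rfl | ⟨q, hyq, hqb⟩
    · exact Or.inr ha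
    · have : p = q := T.oneParent y p q hyp hyq
      subst this
      exact ih p hyp a b hpa hqb

/-- two siblings with a common descendant are equal -/
lemma sibling_eq {x c c' z : V} (hc : c ∈ T.succ x) (hc' : c' ∈ T.succ x)
    (h1 : Relation.ReflTransGen (chld T) z c)
    (h2 : Relation.ReflTransGen (chld T) z c') : c = c' := by
  rcases anc_comparable T z c c' h1 h2 with h | h
  · rcases Relation.ReflTransGen.cases_head h with h' | ⟨m, hm, hmr⟩
    · exact h'
    · exfalso
      have hmx : m = x := T.oneParent c m x hm hc
      rw [hmx] at hmr
      exact no_cycle T x (Relation.TransGen.tail' hmr hc')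
  · rcases Relation.ReflTransGen.cases_head h with h' | ⟨m, hm, hmr⟩
    · exact h'.symm
    · exfalso
      have hmx : m = x := T.oneParent c' m x hm hc'
      rw [hmx] at hmr
      exact no_cycle T x (Relation.TransGen.tail' hmr hc)

omit [Fintype V] in
/-- the root is not the child of any descendant of itself -/
lemma root_not_child {x y : V} (h : Relation.ReflTransGen (chld T) y x)
    (hxy : x ∈ T.succ y) : False :=
  no_cycle T x (Relation.TransGen.head' hxy h)

end AOHelp



namespace AOHelp

attribute [local instance] Classical.propDecidable

variable {V : Type} [Fintype V] [DecidableEq V] (T : AOTree V)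

open Relation

/-- restriction of a solution base to the subtree of a child of the root -/
lemma base_restrict {x c : V} {B : Finset V} (hB : IsSolutionBase T x B)
    (hc : c ∈ T.succ x) (hcB : c ∈ B) :
    IsSolutionBase T c (B.filter (fun y => ReflTransGen (chld T) y c)) := by
  obtain ⟨hxB, hpar, hor, hand⟩ := hB
  set B' := B.filter (fun y => ReflTransGen (chld T) y c) with hB'def
  have hmemB' : ∀ y, y ∈ B' ↔ y ∈ B ∧ ReflTransGen (chld T) y c := by
    intro y; simp [hB'def]
  -- membership transfer for children of members of B'
  have htrans : ∀ y ∈ B', ∀ z ∈ T.succ y, (z ∈ B ↔ z ∈ B') := by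
    intro y hy z hz
    have hyc := ((hmemB' y).mp hy).2
    constructor
    · intro hzB
      exact (hmemB' z).mpr ⟨hzB, ReflTransGen.head hz hyc⟩
    · intro hzB'
      exact ((hmemB' z).mp hzB').1
  refine ⟨(hmemB' c).mpr ⟨hcB, ReflTransGen.refl⟩, ?_, ?_, ?_⟩
  · intro y hy hyc
    obtain ⟨hyB, hyRc⟩ := (hmemB' y).mp hy
    have hyx : y ≠ x := by
      rintro rfl
      exact no_cycle T _ (TransGen.tail' hyRc hc)
    obtain ⟨p, hpB, hyp⟩ := hpar y hyB hyx
    rcases ReflTransGen.cases_head hyRc with rfl | ⟨q, hyq, hqc⟩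
    · exact absurd rfl hyc
    · have hqp : q = p := T.oneParent y q p hyq hyp
      rw [hqp] at hqc
      exact ⟨p, (hmemB' p).mpr ⟨hpB, hqc⟩, hyp⟩
  · intro y hy hne hk
    obtain ⟨z, ⟨hz1, hz2⟩, huniq⟩ := hor y ((hmemB' y).mp hy).1 hne hk
    refine ⟨z, ⟨hz1, (htrans y hy z hz1).mp hz2⟩, ?_⟩
    intro w ⟨hw1, hw2⟩
    exact huniq w ⟨hw1, (htrans y hy w hw1).mpr hw2⟩
  · intro y hy hne hk z hz
    exact (htrans y hy z hz).mp (hand y ((hmemB' y).mp hy).1 hne hk z hz)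

/-- extension of a base at a child of an OR node -/
lemma base_extend_or {x c : V} {B : Finset V} (hk : T.kind x = .orN)
    (hc : c ∈ T.succ x) (hB : IsSolutionBase T c B) :
    IsSolutionBase T x (insert x B) := by
  obtain ⟨hcB, hpar, hor, hand⟩ := hB
  have hdesc := base_desc T hcB hpar
  have hxnotin : ∀ y ∈ B, ∀ z ∈ T.succ y, z ≠ x := by
    rintro y hy z hz rfl
    exact root_not_child T ((hdesc y hy).trans (ReflTransGen.single hc)) hz
  have htrans : ∀ y ∈ B, ∀ z ∈ T.succ y, (z ∈ insert x B ↔ z ∈ B) := by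
    intro y hy z hz
    simp only [Finset.mem_insert]
    constructor
    · rintro (rfl | h)
      · exact absurd rfl (hxnotin y hy z hz)
      · exact h
    · exact Or.inr
  refine ⟨Finset.mem_insert_self x B, ?_, ?_, ?_⟩
  · intro y hy hyx
    have hyB : y ∈ B := by
      rcases Finset.mem_insert.mp hy with rfl | h
      · exact absurd rfl hyx
      · exact h
    by_cases hyc : y = c
    · exact ⟨x, Finset.mem_insert_self x B, hyc ▸ hc⟩
    · obtain ⟨p, hpB, hyp⟩ := hpar y hyB hyc
      exact ⟨p, Finset.mem_insert_of_mem hpB, hyp⟩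
  · intro y hy hne hky
    rcases Finset.mem_insert.mp hy with rfl | hyB
    · refine ⟨c, ⟨hc, Finset.mem_insert_of_mem hcB⟩, ?_⟩
      rintro w ⟨hw1, hw2⟩
      rcases Finset.mem_insert.mp hw2 with rfl | hwB
      · exact absurd (TransGen.single hw1) (no_cycle T w)
      · exact sibling_eq T hw1 hc (ReflTransGen.refl) (hdesc w hwB)
    · obtain ⟨z, ⟨hz1, hz2⟩, huniq⟩ := hor y hyB hne hky
      refine ⟨z, ⟨hz1, Finset.mem_insert_of_mem hz2⟩, ?_⟩
      rintro w ⟨hw1, hw2⟩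
      exact huniq w ⟨hw1, (htrans y hyB w hw1).mp hw2⟩
  · intro y hy hne hky z hz
    rcases Finset.mem_insert.mp hy with rfl | hyB
    · exact absurd hky (by simp [hk])
    · exact Finset.mem_insert_of_mem (hand y hyB hne hky z hz)

end AOHelp

namespace AOHelp

open Relation

variable {V : Type} [Fintype V] [DecidableEq V] (T : AOTree V)

attribute [local instance] Classical.propDecidable

/-- extension of bases at all children of an AND node -/
lemma base_extend_and {x : V} (hk : T.kind x = .andN) (g : V → Finset V)
    (hg : ∀ c ∈ T.succ x, IsSolutionBase T c (g c)) :
    IsSolutionBase T x (insert x ((T.succ x).biUnion g)) := by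
  have hdesc : ∀ c ∈ T.succ x, ∀ y ∈ g c, ReflTransGen (chld T) y c := by
    intro c hc y hy
    exact base_desc T (hg c hc).1 (hg c hc).2.1 y hy
  have hxnotin : ∀ c ∈ T.succ x, ∀ y ∈ g c, ∀ z ∈ T.succ y, z ≠ x := by
    rintro c hc y hy z hz rfl
    exact root_not_child T ((hdesc c hc y hy).trans (ReflTransGen.single hc)) hz
  -- membership transfer: children of a member of g c lie in g c iff in the big union
  have htrans : ∀ c ∈ T.succ x, ∀ y ∈ g c, ∀ z ∈ T.succ y,
      (z ∈ insert x ((T.succ x).biUnion g) ↔ z ∈ g c) := by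
    intro c hc y hy z hz
    constructor
    · intro hzmem
      rcases Finset.mem_insert.mp hzmem with rfl | hzU
      · exact absurd rfl (hxnotin c hc y hy z hz)
      · obtain ⟨c', hc', hzc'⟩ := Finset.mem_biUnion.mp hzU
        have : c' = c :=
          sibling_eq T hc' hc (hdesc c' hc' z hzc')
            (ReflTransGen.head hz (hdesc c hc y hy))
        exact this ▸ hzc'
    · intro h
      exact Finset.mem_insert_of_mem (Finset.mem_biUnion.mpr ⟨c, hc, h⟩)
  refine ⟨Finset.mem_insert_self x _, ?_, ?_, ?_⟩
  · intro y hy hyx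
    obtain ⟨c, hc, hyc⟩ := Finset.mem_biUnion.mp (by
      rcases Finset.mem_insert.mp hy with rfl | h
      · exact absurd rfl hyx
      · exact h)
    by_cases hyceq : y = c
    · exact ⟨x, Finset.mem_insert_self x _, hyceq ▸ hc⟩
    · obtain ⟨p, hpB, hyp⟩ := (hg c hc).2.1 y hyc hyceq
      exact ⟨p, Finset.mem_insert_of_mem (Finset.mem_biUnion.mpr ⟨c, hc, hpB⟩), hyp⟩
  · intro y hy hne hky
    rcases Finset.mem_insert.mp hy with rfl | hyU
    · exact absurd hky (by simp [hk])
    · obtain ⟨c, hc, hyc⟩ := Finset.mem_biUnion.mp hyU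
      obtain ⟨z, ⟨hz1, hz2⟩, huniq⟩ := (hg c hc).2.2.1 y hyc hne hky
      refine ⟨z, ⟨hz1, (htrans c hc y hyc z hz1).mpr hz2⟩, ?_⟩
      rintro w ⟨hw1, hw2⟩
      exact huniq w ⟨hw1, (htrans c hc y hyc w hw1).mp hw2⟩
  · intro y hy hne hky z hz
    rcases Finset.mem_insert.mp hy with rfl | hyU
    · exact Finset.mem_insert_of_mem (Finset.mem_biUnion.mpr ⟨z, hz, (hg z hz).1⟩)
    · obtain ⟨c, hc, hyc⟩ := Finset.mem_biUnion.mp hyU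
      exact (htrans c hc y hyc z hz).mpr ((hg c hc).2.2.2 y hyc hne hky z hz)

/-- nonterm leaf count ignores internal nodes -/
lemma count_insert_internal {x : V} (hne : T.succ x ≠ ∅) (B : Finset V) :
    nontermLeafCount T (insert x B) = nontermLeafCount T B := by
  unfold nontermLeafCount
  rw [Finset.filter_insert, if_neg (by simp [hne])]

lemma count_mono {B B' : Finset V} (h : B' ⊆ B) :
    nontermLeafCount T B' ≤ nontermLeafCount T B :=
  Finset.card_le_card (Finset.filter_subset_filter _ h)

/-- bases hanging below distinct children are disjoint -/
lemma bases_disjoint {x : V} (g : V → Finset V)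
    (hg : ∀ c ∈ T.succ x, ∀ y ∈ g c, ReflTransGen (chld T) y c) :
    ∀ c ∈ T.succ x, ∀ c' ∈ T.succ x, c ≠ c' → Disjoint (g c) (g c') := by
  intro c hc c' hc' hne
  rw [Finset.disjoint_left]
  intro y hyc hyc'
  exact hne (sibling_eq T hc hc' (hg c hc y hyc) (hg c' hc' y hyc'))

lemma count_biUnion {x : V} (g : V → Finset V)
    (hg : ∀ c ∈ T.succ x, ∀ y ∈ g c, ReflTransGen (chld T) y c) :
    nontermLeafCount T ((T.succ x).biUnion g) = ∑ c ∈ T.succ x, nontermLeafCount T (g c) := by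
  unfold nontermLeafCount
  rw [Finset.filter_biUnion]
  exact Finset.card_biUnion (fun c hc c' hc' hne =>
    Finset.disjoint_filter_filter (bases_disjoint T g hg c hc c' hc' hne))

end AOHelp

namespace AOHelp

open Relation

attribute [local instance] Classical.propDecidable

theorem key {V : Type} [Fintype V] [DecidableEq V] (T : AOTree V) (pn : V → ℕ∞)
    (hpn : IsProofNumber T pn) :
    ∀ x : V, pn x = sInf {k : ℕ∞ | ∃ B : Finset V, IsSolutionBase T x B ∧
        (∀ y ∈ B, T.succ y = ∅ → T.leafKind y ≠ .unsolv) ∧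
        k = (nontermLeafCount T B : ℕ∞)} := by
  intro x
  induction x using T.acyclic.induction with
  | _ x ih =>
  by_cases hleaf : T.succ x = ∅
  · have hpx := (hpn x).1 hleaf
    have hsingle : IsSolutionBase T x {x} := by
      refine ⟨Finset.mem_singleton_self x, ?_, ?_, ?_⟩
      · intro y hy hne; exact absurd (Finset.mem_singleton.mp hy) hne
      · intro y hy hne _; exact absurd (Finset.mem_singleton.mp hy ▸ hleaf) hne
      · intro y hy hne _; exact absurd (Finset.mem_singleton.mp hy ▸ hleaf) hne
    cases hlk : T.leafKind x
    · -- solv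
      rw [hlk] at hpx
      rw [hpx]
      refine le_antisymm zero_le (sInf_le ?_)
      refine ⟨{x}, hsingle, ?_, ?_⟩
      · intro y hy _; rw [Finset.mem_singleton.mp hy, hlk]; simp
      · simp [nontermLeafCount, Finset.filter_singleton, hlk]
    · -- unsolv
      rw [hlk] at hpx
      rw [hpx]
      have : {k : ℕ∞ | ∃ B : Finset V, IsSolutionBase T x B ∧
          (∀ y ∈ B, T.succ y = ∅ → T.leafKind y ≠ .unsolv) ∧
          k = (nontermLeafCount T B : ℕ∞)} = ∅ := by
        ext k
        simp only [Set.mem_setOf_eq, Set.mem_empty_iff_false, iff_false, not_exists]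
        rintro B ⟨hB, hnu, rfl⟩
        exact hnu x hB.1 hleaf hlk
      rw [this, sInf_empty]
    · -- nonterm
      rw [hlk] at hpx
      have hpx' : pn x = (1 : ℕ∞) := hpx
      rw [hpx']
      refine le_antisymm (le_sInf ?_) (sInf_le ?_)
      · rintro k ⟨B, hB, _, rfl⟩
        have : x ∈ B.filter (fun y => T.succ y = ∅ ∧ T.leafKind y = .nonterm) :=
          Finset.mem_filter.mpr ⟨hB.1, hleaf, hlk⟩
        have hcard : 1 ≤ nontermLeafCount T B :=
          Finset.card_pos.mpr ⟨x, this⟩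
        exact_mod_cast hcard
      · refine ⟨{x}, hsingle, ?_, ?_⟩
        · intro y hy _; rw [Finset.mem_singleton.mp hy, hlk]; simp
        · simp [nontermLeafCount, Finset.filter_singleton, hleaf, hlk]
  · have hpx := (hpn x).2 hleaf
    cases hk : T.kind x
    · -- orN
      rw [hk] at hpx
      refine le_antisymm (le_sInf ?_) ?_
      · rintro k ⟨B, hB, hnu, rfl⟩
        obtain ⟨c, ⟨hc, hcB⟩, _⟩ := hB.2.2.1 x hB.1 hleaf hk
        set B' := B.filter (fun y => ReflTransGen (chld T) y c) with hB'def
        have hB' : IsSolutionBase T c B' := base_restrict T hB hc hcB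
        have hsub : B' ⊆ B := Finset.filter_subset _ _
        calc pn x ≤ pn c := hpx ▸ Finset.inf_le hc
          _ ≤ (nontermLeafCount T B' : ℕ∞) := by
              rw [ih c hc]
              exact sInf_le ⟨B', hB', fun y hy => hnu y (hsub hy), rfl⟩
          _ ≤ (nontermLeafCount T B : ℕ∞) := by
              exact_mod_cast count_mono T hsub
      · rw [hpx]
        refine Finset.le_inf ?_
        intro c hc
        rw [ih c hc]
        refine le_sInf ?_
        rintro k ⟨B, hB, hnu, rfl⟩
        have hext : IsSolutionBase T x (insert x B) := base_extend_or T hk hc hB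
        refine sInf_le ⟨insert x B, hext, ?_, ?_⟩
        · intro y hy hys
          rcases Finset.mem_insert.mp hy with rfl | hyB
          · exact absurd hys hleaf
          · exact hnu y hyB hys
        · rw [count_insert_internal T hleaf]
    · -- andN
      rw [hk] at hpx
      refine le_antisymm (le_sInf ?_) ?_
      · rintro k ⟨B, hB, hnu, rfl⟩
        have hall : ∀ c ∈ T.succ x, c ∈ B := hB.2.2.2 x hB.1 hleaf hk
        set g : V → Finset V := fun c => B.filter (fun y => ReflTransGen (chld T) y c)
          with hgdef
        have hg : ∀ c ∈ T.succ x, IsSolutionBase T c (g c) :=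
          fun c hc => base_restrict T hB hc (hall c hc)
        have hgsub : ∀ c, g c ⊆ B := fun c => Finset.filter_subset _ _
        have hgdesc : ∀ c ∈ T.succ x, ∀ y ∈ g c, ReflTransGen (chld T) y c := by
          intro c hc y hy
          exact (Finset.mem_filter.mp hy).2
        have hsum : ∑ c ∈ T.succ x, nontermLeafCount T (g c) ≤ nontermLeafCount T B := by
          rw [← count_biUnion T g hgdesc]
          exact count_mono T (Finset.biUnion_subset.mpr (fun c _ => hgsub c))
        calc pn x = ∑ c ∈ T.succ x, pn c := hpx
          _ ≤ ∑ c ∈ T.succ x, (nontermLeafCount T (g c) : ℕ∞) := by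
              refine Finset.sum_le_sum ?_
              intro c hc
              rw [ih c hc]
              exact sInf_le ⟨g c, hg c hc, fun y hy => hnu y (hgsub c hy), rfl⟩
          _ ≤ (nontermLeafCount T B : ℕ∞) := by
              rw [← Nat.cast_sum]
              exact_mod_cast hsum
      · rw [hpx]
        by_cases htop : ∑ c ∈ T.succ x, pn c = ⊤
        · rw [htop]; exact le_top
        · have hc_ne_top : ∀ c ∈ T.succ x, pn c ≠ ⊤ := by
            intro c hc hctop
            exact htop (WithTop.sum_eq_top.mpr ⟨c, hc, hctop⟩)
          have hchoice : ∀ c : V, ∃ B : Finset V, c ∈ T.succ x →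
              IsSolutionBase T c B ∧
              (∀ y ∈ B, T.succ y = ∅ → T.leafKind y ≠ .unsolv) ∧
              pn c = (nontermLeafCount T B : ℕ∞) := by
            intro c
            by_cases hc : c ∈ T.succ x
            · have hne : pn c ≠ ⊤ := hc_ne_top c hc
              rw [ih c hc] at hne ⊢
              have hSnonempty : {k : ℕ∞ | ∃ B : Finset V, IsSolutionBase T c B ∧
                  (∀ y ∈ B, T.succ y = ∅ → T.leafKind y ≠ .unsolv) ∧
                  k = (nontermLeafCount T B : ℕ∞)}.Nonempty := by
                by_contra hemp
                rw [Set.not_nonempty_iff_eq_empty] at hemp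
                rw [hemp, sInf_empty] at hne
                exact hne rfl
              obtain ⟨B, hB, hnu, hcount⟩ := csInf_mem hSnonempty
              exact ⟨B, fun _ => ⟨hB, hnu, hcount⟩⟩
            · exact ⟨∅, fun h => absurd h hc⟩
          choose g hg using hchoice
          have hgbase : ∀ c ∈ T.succ x, IsSolutionBase T c (g c) :=
            fun c hc => (hg c hc).1
          have hext : IsSolutionBase T x (insert x ((T.succ x).biUnion g)) :=
            base_extend_and T hk g hgbase
          have hgdesc : ∀ c ∈ T.succ x, ∀ y ∈ g c, ReflTransGen (chld T) y c := by
            intro c hc y hy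
            exact base_desc T (hgbase c hc).1 (hgbase c hc).2.1 y hy
          refine sInf_le ⟨insert x ((T.succ x).biUnion g), hext, ?_, ?_⟩
          · intro y hy hys
            rcases Finset.mem_insert.mp hy with rfl | hyU
            · exact absurd hys hleaf
            · obtain ⟨c, hc, hyc⟩ := Finset.mem_biUnion.mp hyU
              exact (hg c hc).2.1 y hyc hys
          · rw [count_insert_internal T hleaf, count_biUnion T g hgdesc, Nat.cast_sum]
            exact Finset.sum_congr rfl (fun c hc => (hg c hc).2.2)

end AOHelp

namespace AOHelp

def dual {V : Type} (T : AOTree V) : AOTree V where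
  succ := T.succ
  kind v := match T.kind v with | .orN => .andN | .andN => .orN
  leafKind v := match T.leafKind v with
    | .solv => .unsolv | .unsolv => .solv | .nonterm => .nonterm
  acyclic := T.acyclic
  oneParent := T.oneParent

variable {V : Type} (T : AOTree V)

@[simp] lemma dual_succ : (dual T).succ = T.succ := rfl

lemma dual_isProofNumber (dn : V → ℕ∞) (hdn : IsDisproofNumber T dn) :
    IsProofNumber (dual T) dn := by
  intro n
  constructor
  · intro h
    have h2 := (hdn n).1 h
    cases hl : T.leafKind n <;> rw [hl] at h2 <;> simp [dual, hl] <;> exact h2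
  · intro h
    have h2 := (hdn n).2 h
    cases hkk : T.kind n <;> rw [hkk] at h2 <;> simp [dual, hkk] <;> exact h2

lemma dual_kind_or (y : V) : (dual T).kind y = .orN ↔ T.kind y = .andN := by
  cases h : T.kind y <;> simp [dual, h]

lemma dual_kind_and (y : V) : (dual T).kind y = .andN ↔ T.kind y = .orN := by
  cases h : T.kind y <;> simp [dual, h]

lemma dual_leaf_ne (y : V) : (dual T).leafKind y ≠ .unsolv ↔ T.leafKind y ≠ .solv := by
  cases h : T.leafKind y <;> simp [dual, h]

lemma dual_leaf_nonterm (y : V) :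
    (dual T).leafKind y = .nonterm ↔ T.leafKind y = .nonterm := by
  cases h : T.leafKind y <;> simp [dual, h]

lemma dual_solutionBase (x : V) (B : Finset V) :
    IsSolutionBase (dual T) x B ↔ IsDisproofBase T x B := by
  constructor
  · rintro ⟨h1, h2, h3, h4⟩
    exact ⟨h1, h2,
      fun y hy hne hk => h4 y hy hne ((dual_kind_and T y).mpr hk),
      fun y hy hne hk => h3 y hy hne ((dual_kind_or T y).mpr hk)⟩
  · rintro ⟨h1, h2, h3, h4⟩
    exact ⟨h1, h2,
      fun y hy hne hk => h4 y hy hne ((dual_kind_or T y).mp hk),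
      fun y hy hne hk => h3 y hy hne ((dual_kind_and T y).mp hk)⟩

lemma dual_count [DecidableEq V] (B : Finset V) :
    nontermLeafCount (dual T) B = nontermLeafCount T B := by
  unfold nontermLeafCount
  congr 1
  apply Finset.filter_congr
  intro y _
  rw [show (dual T).succ y = T.succ y from rfl]
  constructor
  · rintro ⟨h1, h2⟩; exact ⟨h1, (dual_leaf_nonterm T y).mp h2⟩
  · rintro ⟨h1, h2⟩; exact ⟨h1, (dual_leaf_nonterm T y).mpr h2⟩

end AOHelp


/-- For every node `x` of a finite AND/OR tree: `pn x` equals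
the minimum, over all solution bases rooted at `x` containing no unsolvable
terminal leaf, of the number of non-terminal leaves of the base (the minimum
over the empty collection being `∞`); dually, `dn x` equals the minimum, over
all disproof bases rooted at `x` containing no solvable terminal leaf, of the
number of non-terminal leaves of the base. -/
theorem proof_number_eq_min_nonterminal_leaves {V : Type} [Fintype V] [DecidableEq V]
    (T : AOTree V) (pn dn : V → ℕ∞)
    (hpn : IsProofNumber T pn) (hdn : IsDisproofNumber T dn) :
    ∀ x : V,
      pn x = sInf {k : ℕ∞ | ∃ B : Finset V, IsSolutionBase T x B ∧
        (∀ y ∈ B, T.succ y = ∅ → T.leafKind y ≠ .unsolv) ∧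
        k = (nontermLeafCount T B : ℕ∞)} ∧
      dn x = sInf {k : ℕ∞ | ∃ B : Finset V, IsDisproofBase T x B ∧
        (∀ y ∈ B, T.succ y = ∅ → T.leafKind y ≠ .solv) ∧
        k = (nontermLeafCount T B : ℕ∞)} := by
  intro x
  refine ⟨AOHelp.key T pn hpn x, ?_⟩
  have h := AOHelp.key (AOHelp.dual T) dn (AOHelp.dual_isProofNumber T dn hdn) x
  rw [h]
  congr 1
  ext k
  simp only [Set.mem_setOf_eq]
  constructor
  · rintro ⟨B, hB, hnu, rfl⟩
    refine ⟨B, (AOHelp.dual_solutionBase T x B).mp hB, ?_, by rw [AOHelp.dual_count]⟩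
    intro y hy hys
    exact (AOHelp.dual_leaf_ne T y).mp (hnu y hy hys)
  · rintro ⟨B, hB, hns, rfl⟩
    refine ⟨B, (AOHelp.dual_solutionBase T x B).mpr hB, ?_, by rw [AOHelp.dual_count]⟩
    intro y hy hys
    exact (AOHelp.dual_leaf_ne T y).mpr (hns y hy hys)
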